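/- Let (Ω,P) be a probability space carrying a random variable H with the exponential distribution of rate 1 and an independent Bernoulli random variable B with success probability p ∈ [0,1]. Let α > 0 and k = ∫_α^∞ (1/α − 1/H)·e^{−H} dH. Define the aggressive water-filling realized rate R = (1 − B)·log₂(H/α)·1{H ≥ α} (rate is zero on interfered symbols, which are in outage, and when H < α). Then E[R] = (1 − p)·log₂(e)·(e^{−α}/α − k). -/

import Mathlib

open MeasureTheory ProbabilityTheory Real Set
open scoped ENNReal NNReal

open Filter Topology in
private lemma my_int_exp_div {α : ℝ} (hα : 0 < α) :
    IntegrableOn (fun x => Real.exp (-x) / x) (Ioi α) := by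
  have h0 : IntegrableOn (fun x => Real.exp (-x) / α) (Ioi α) := by
    have := (exp_neg_integrableOn_Ioi α (b := 1) one_pos).div_const α
    simpa [IntegrableOn] using this
  refine MeasureTheory.Integrable.mono h0 ?_ ?_
  · exact ((measurable_exp.comp measurable_neg).div measurable_id).aestronglyMeasurable
  · rw [ae_restrict_iff' measurableSet_Ioi]
    filter_upwards with x hx
    have hx0 : 0 < x := hα.trans hx
    rw [norm_of_nonneg (by positivity), norm_of_nonneg (by positivity)]
    exact div_le_div_of_nonneg_left (exp_pos _).le hα hx.le

open Filter Topology in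
private lemma my_int_log_exp {α : ℝ} (hα : 0 < α) :
    IntegrableOn (fun x => Real.log (x / α) * Real.exp (-x)) (Ioi α) := by
  have h0 : IntegrableOn (fun x => (1 / α) * (Real.exp (-x) * x ^ ((2:ℝ) - 1))) (Ioi α) :=
    ((Real.GammaIntegral_convergent (by norm_num : (0:ℝ) < 2)).mono_set
      (Ioi_subset_Ioi hα.le)).const_mul (1 / α)
  refine MeasureTheory.Integrable.mono h0 ?_ ?_
  · exact ((Real.measurable_log.comp (measurable_id.div_const α)).mul
      (measurable_exp.comp measurable_neg)).aestronglyMeasurable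
  · rw [ae_restrict_iff' measurableSet_Ioi]
    filter_upwards with x hx
    have hx0 : 0 < x := hα.trans hx
    have h1 : 0 ≤ Real.log (x / α) := Real.log_nonneg ((one_le_div hα).2 hx.le)
    have h2 : Real.log (x / α) ≤ x / α := (Real.log_le_sub_one_of_pos (by positivity)).trans
      (by linarith)
    have hr : x ^ ((2:ℝ) - 1) = x := by norm_num
    rw [norm_of_nonneg (by positivity), norm_of_nonneg (by positivity), hr]
    calc Real.log (x / α) * Real.exp (-x) ≤ (x / α) * Real.exp (-x) :=
          mul_le_mul_of_nonneg_right h2 (exp_pos _).le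
      _ = 1 / α * (Real.exp (-x) * x) := by ring

open Filter Topology in
private lemma my_ibp {α : ℝ} (hα : 0 < α) :
    ∫ x in Ioi α, Real.log (x / α) * Real.exp (-x) = ∫ x in Ioi α, Real.exp (-x) / x := by
  have hint1 := my_int_log_exp hα
  have hint2 := my_int_exp_div hα
  have hderiv : ∀ x ∈ Ici α, HasDerivAt (fun y => -(Real.log (y / α) * Real.exp (-y)))
      (Real.log (x / α) * Real.exp (-x) - Real.exp (-x) / x) x := by
    intro x hx
    have hx0 : 0 < x := hα.trans_le hx
    have h1 : HasDerivAt (fun y : ℝ => Real.log (y / α)) (1 / x) x := by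
      have := (Real.hasDerivAt_log (ne_of_gt (div_pos hx0 hα))).comp x
        ((hasDerivAt_id x).div_const α)
      refine this.congr_deriv ?_
      field_simp
    have h2 : HasDerivAt (fun y : ℝ => Real.exp (-y)) (-Real.exp (-x)) x := by
      simpa using ((hasDerivAt_id x).neg.exp)
    have h3 := (h1.mul h2).neg
    refine h3.congr_deriv ?_
    field_simp
    ring
  have hlim : Tendsto (fun y => -(Real.log (y / α) * Real.exp (-y))) atTop (𝓝 0) := by
    rw [← neg_zero]
    refine Tendsto.neg ?_
    have hbig : Tendsto (fun y : ℝ => 1 / α * (y ^ (1:ℕ) * Real.exp (-y))) atTop (𝓝 0) := by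
      have := (tendsto_pow_mul_exp_neg_atTop_nhds_zero 1).const_mul (1 / α)
      simpa using this
    refine squeeze_zero' ?_ ?_ hbig
    · filter_upwards [eventually_ge_atTop α] with x hx
      have hx0 : 0 < x := hα.trans_le hx
      have h1 : 0 ≤ Real.log (x / α) := Real.log_nonneg ((one_le_div hα).2 hx)
      positivity
    · filter_upwards [eventually_ge_atTop α] with x hx
      have hx0 : 0 < x := hα.trans_le hx
      have h2 : Real.log (x / α) ≤ x / α := (Real.log_le_sub_one_of_pos (by positivity)).trans
        (by linarith)
      calc Real.log (x / α) * Real.exp (-x) ≤ (x / α) * Real.exp (-x) :=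
            mul_le_mul_of_nonneg_right h2 (exp_pos _).le
        _ = 1 / α * (x ^ (1:ℕ) * Real.exp (-x)) := by ring
  have h := integral_Ioi_of_hasDerivAt_of_tendsto' hderiv (hint1.sub hint2) hlim
  rw [integral_sub hint1 hint2] at h
  have hfα : -(Real.log (α / α) * Real.exp (-α)) = 0 := by
    rw [div_self hα.ne', Real.log_one]; ring
  rw [hfα, sub_zero] at h
  linarith

private lemma my_k {α k : ℝ} (hα : 0 < α)
    (hk : k = ∫ x in Ioi α, (1 / α - 1 / x) * Real.exp (-x)) :
    Real.exp (-α) / α - k = ∫ x in Ioi α, Real.exp (-x) / x := by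
  have hint2 : IntegrableOn (fun x => Real.exp (-x) / x) (Ioi α) := my_int_exp_div hα
  have hint3 : IntegrableOn (fun x => Real.exp (-x) / α) (Ioi α) := by
    have := (exp_neg_integrableOn_Ioi α (b := 1) one_pos).div_const α
    simpa [IntegrableOn] using this
  have hcongr : ∀ x : ℝ, (1 / α - 1 / x) * Real.exp (-x)
      = Real.exp (-x) / α - Real.exp (-x) / x := by
    intro x; ring
  rw [hk]
  simp_rw [hcongr]
  rw [integral_sub hint3 hint2]
  have h4 : ∫ x in Ioi α, Real.exp (-x) / α = Real.exp (-α) / α := by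
    simp_rw [div_eq_mul_inv]
    rw [integral_mul_const, integral_exp_neg_Ioi]
  rw [h4]
  ring

/-- Aggressive water-filling: with unit-rate exponential channel power `H`, independent
Bernoulli(`p`) interference indicator `B`, threshold `α` satisfying the power constraint
`∫_α^∞ (1/α − 1/H)e^{−H} dH = k`, and realized rate `R = (1−B)·log₂(H/α)·1{H ≥ α}`
(interfered symbols are in outage and carry zero rate), the average spectral efficiency is
`E[R] = (1−p)·log₂(e)·(e^{−α}/α − k)`. -/
theorem aggressive_wf_average_spectral_efficiency
    {Ω : Type*} [MeasurableSpace Ω] (Pr : Measure Ω) [IsProbabilityMeasure Pr]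
    (H B : Ω → ℝ) (hHm : Measurable H) (hBm : Measurable B)
    (hH : Measure.map H Pr = ProbabilityTheory.expMeasure 1)
    (p : ℝ) (hp0 : 0 ≤ p) (hp1 : p ≤ 1)
    (hB01 : ∀ ω, B ω = 0 ∨ B ω = 1)
    (hBp : Pr {ω | B ω = 1} = ENNReal.ofReal p)
    (hindep : IndepFun H B Pr)
    (α k : ℝ) (hα : 0 < α)
    (hk : k = ∫ x in Ioi α, (1 / α - 1 / x) * Real.exp (-x))
    (R : Ω → ℝ)
    (hR : ∀ ω, R ω =
      (1 - B ω) * Real.logb 2 (H ω / α) * (if α ≤ H ω then 1 else 0)) :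
    ∫ ω, R ω ∂Pr
      = (1 - p) * Real.logb 2 (Real.exp 1) * (Real.exp (-α) / α - k) := by
  set g : ℝ → ℝ := fun x => Real.logb 2 (x / α) * (if α ≤ x then 1 else 0) with hg
  have hgm : Measurable g := by
    apply Measurable.mul
    · exact (Real.measurable_log.comp (measurable_id.div_const α)).div_const (Real.log 2)
    · exact Measurable.ite measurableSet_Ici measurable_const measurable_const
  -- rewrite R as product
  have hRe : ∀ ω, R ω = (1 - B ω) * g (H ω) := by
    intro ω; rw [hR]; simp only [hg]; ring
  -- independence of the two factors
  have hindep2 : IndepFun (fun ω => 1 - B ω) (fun ω => g (H ω)) Pr :=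
    (hindep.symm).comp (φ := fun b : ℝ => 1 - b) (ψ := g)
      (measurable_const.sub measurable_id) hgm
  have hmul : ∫ ω, R ω ∂Pr = (∫ ω, (1 - B ω) ∂Pr) * ∫ ω, g (H ω) ∂Pr := by
    calc ∫ ω, R ω ∂Pr = ∫ ω, (1 - B ω) * g (H ω) ∂Pr :=
          integral_congr_ae (Filter.Eventually.of_forall hRe)
      _ = _ := hindep2.integral_fun_mul_eq_mul_integral
            ((measurable_const.sub hBm).aestronglyMeasurable)
            ((hgm.comp hHm).aestronglyMeasurable)
  -- expectation of 1 - B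
  have hBind : B = Set.indicator {ω | B ω = 1} (fun _ => (1:ℝ)) := by
    funext ω
    rcases hB01 ω with h | h <;> simp [Set.indicator, h]
  have hsetm : MeasurableSet {ω | B ω = 1} := hBm (measurableSet_singleton 1)
  have hBint : Integrable B Pr := by
    rw [hBind]; exact (integrable_const (1:ℝ)).indicator hsetm
  have hIB : ∫ ω, B ω ∂Pr = p := by
    conv_lhs => rw [hBind]
    rw [integral_indicator_const (1:ℝ) hsetm, measureReal_def, hBp, smul_eq_mul, mul_one,
      ENNReal.toReal_ofReal hp0]
  have hI1B : ∫ ω, (1 - B ω) ∂Pr = 1 - p := by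
    rw [integral_sub (integrable_const 1) hBint, integral_const, hIB]
    simp
  -- expectation of g(H)
  have hgH : ∫ ω, g (H ω) ∂Pr = ∫ x, g x ∂(ProbabilityTheory.expMeasure 1) := by
    rw [← hH, integral_map hHm.aemeasurable hgm.aestronglyMeasurable]
  have hexp : (ProbabilityTheory.expMeasure 1)
      = volume.withDensity (fun x => ((exponentialPDFReal 1 x).toNNReal : ℝ≥0∞)) := rfl
  have hdm : Measurable (fun x => (exponentialPDFReal 1 x).toNNReal) :=
    measurable_real_toNNReal.comp (measurable_exponentialPDFReal 1)
  have hwd : ∫ x, g x ∂(ProbabilityTheory.expMeasure 1)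
      = ∫ x, ((exponentialPDFReal 1 x).toNNReal : ℝ≥0) • g x := by
    rw [hexp]; exact integral_withDensity_eq_integral_smul hdm g
  have hpoint : ∀ x, ((exponentialPDFReal 1 x).toNNReal : ℝ≥0) • g x
      = (Ioi α).indicator (fun x => Real.logb 2 (x / α) * Real.exp (-x)) x := by
    intro x
    have hsm : ((exponentialPDFReal 1 x).toNNReal : ℝ≥0) • g x
        = exponentialPDFReal 1 x * g x := by
      rw [NNReal.smul_def, smul_eq_mul,
        Real.coe_toNNReal _ (exponentialPDFReal_nonneg one_pos x)]
    rw [hsm]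
    have hpdf : exponentialPDFReal 1 x = if 0 ≤ x then Real.exp (-x) else 0 := by
      simp [exponentialPDFReal, gammaPDFReal, Real.Gamma_one]
    rw [hpdf, Set.indicator_apply]
    simp only [hg, mem_Ioi]
    by_cases hx : α < x
    · rw [if_pos hx, if_pos (hα.trans hx).le, if_pos hx.le]; ring
    · rw [if_neg hx]
      by_cases h0x : 0 ≤ x
      · by_cases hax : α ≤ x
        · have hxα : x = α := le_antisymm (not_lt.1 hx) hax
          rw [if_pos h0x, if_pos hax, hxα, div_self hα.ne', Real.logb_one]; ring
        · rw [if_pos h0x, if_neg hax]; ring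
      · rw [if_neg h0x]; ring
  have hind : ∫ x, ((exponentialPDFReal 1 x).toNNReal : ℝ≥0) • g x
      = ∫ x in Ioi α, Real.logb 2 (x / α) * Real.exp (-x) := by
    simp_rw [hpoint]
    exact integral_indicator measurableSet_Ioi
  have hlogb : ∫ x in Ioi α, Real.logb 2 (x / α) * Real.exp (-x)
      = (Real.log 2)⁻¹ * ∫ x in Ioi α, Real.log (x / α) * Real.exp (-x) := by
    have hpt : ∀ x : ℝ, Real.logb 2 (x / α) * Real.exp (-x)
        = (Real.log 2)⁻¹ * (Real.log (x / α) * Real.exp (-x)) := by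
      intro x; rw [Real.logb]; ring
    simp_rw [hpt]
    exact integral_const_mul _ _
  rw [hmul, hI1B, hgH, hwd, hind, hlogb, my_ibp hα, ← my_k hα hk]
  have h2 : Real.logb 2 (Real.exp 1) = (Real.log 2)⁻¹ := by
    rw [Real.logb, Real.log_exp, one_div]
  rw [h2]
  ring
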